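/- Let $v \in H^{1/2}_+(\mathbb{T})$, i.e. $v \in L^2(\mathbb{T})$ with Fourier coefficients $v_k$ vanishing for $k < 0$ and $\sum_{k \geq 0}(1+k)|v_k|^2 < \infty$. Let $h \in L^2_+(\mathbb{T})$ (negative Fourier coefficients vanish). Then the Hankel operator $H_v(h) := \Pi_+(v \bar{h})$, where $\Pi_+$ projects onto nonnegative Fourier modes, satisfies $\|H_v(h)\|_{L^2} \leq \|v\|_{H^{1/2}}\|h\|_{L^2}$, where $\|v\|_{H^{1/2}}^2 = \sum_{k \geq 0}(1+k)|v_k|^2$. -/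
import Mathlib

open Complex

/-- Equiv sending `(k, j)` to `(k+j, j)`. -/
def sigmaEquiv : (ℕ × ℕ) ≃ Σ l : ℕ, Fin (l + 1) where
  toFun p := ⟨p.1 + p.2, ⟨p.2, Nat.lt_succ_of_le (Nat.le_add_left _ _)⟩⟩
  invFun σ := (σ.1 - σ.2.1, σ.2.1)
  left_inv := by rintro ⟨k, j⟩; simp
  right_inv := by
    rintro ⟨l, ⟨i, hi⟩⟩
    have h1 : l - i + i = l := Nat.sub_add_cancel (Nat.lt_succ_iff.1 hi)
    exact Sigma.ext h1 ((Fin.heq_ext_iff (by simp [h1])).2 rfl)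

/-- Cauchy–Schwarz for tsums of nonnegative reals. -/
lemma tsum_cs (f g : ℕ → ℝ) (hf : ∀ i, 0 ≤ f i) (hg : ∀ i, 0 ≤ g i)
    (hf2 : Summable fun i => f i ^ 2) (hg2 : Summable fun i => g i ^ 2) :
    (∑' i, f i * g i) ^ 2 ≤ (∑' i, f i ^ 2) * ∑' i, g i ^ 2 := by
  have hA : 0 ≤ ∑' i, f i ^ 2 := tsum_nonneg fun i => sq_nonneg _
  have hB : 0 ≤ ∑' i, g i ^ 2 := tsum_nonneg fun i => sq_nonneg _
  have key : ∑' i, f i * g i ≤ Real.sqrt ((∑' i, f i ^ 2) * ∑' i, g i ^ 2) := by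
    refine Summable.tsum_le_of_sum_le ?_ fun s => ?_
    · refine (hf2.add hg2).of_nonneg_of_le (fun i => mul_nonneg (hf i) (hg i)) fun i => ?_
      nlinarith [sq_nonneg (f i - g i)]
    · have h1 : (∑ i ∈ s, f i * g i) ^ 2 ≤ (∑ i ∈ s, f i ^ 2) * ∑ i ∈ s, g i ^ 2 :=
        Finset.sum_mul_sq_le_sq_mul_sq s f g
      have h2 : (∑ i ∈ s, f i ^ 2) * ∑ i ∈ s, g i ^ 2 ≤ (∑' i, f i ^ 2) * ∑' i, g i ^ 2 :=
        mul_le_mul (Summable.sum_le_tsum s (fun i _ => sq_nonneg _) hf2)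
          (Summable.sum_le_tsum s (fun i _ => sq_nonneg _) hg2)
          (Finset.sum_nonneg fun i _ => sq_nonneg _) hA
      have := Real.sqrt_le_sqrt (h1.trans h2)
      rwa [Real.sqrt_sq (Finset.sum_nonneg fun i _ => mul_nonneg (hf i) (hg i))] at this
  calc (∑' i, f i * g i) ^ 2
      ≤ Real.sqrt ((∑' i, f i ^ 2) * ∑' i, g i ^ 2) ^ 2 :=
        pow_le_pow_left₀ (tsum_nonneg fun i => mul_nonneg (hf i) (hg i)) key 2
    _ = (∑' i, f i ^ 2) * ∑' i, g i ^ 2 := Real.sq_sqrt (mul_nonneg hA hB)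

theorem hankel_L2_bound (v h : ℕ → ℂ)
    (hv : Summable fun k : ℕ => (1 + (k : ℝ)) * ‖v k‖ ^ 2)
    (hh : Summable fun l : ℕ => ‖h l‖ ^ 2) :
    ∑' k : ℕ, ‖∑' j : ℕ, v (k + j) * starRingEnd ℂ (h j)‖ ^ 2 ≤
      (∑' k : ℕ, (1 + (k : ℝ)) * ‖v k‖ ^ 2) * ∑' l : ℕ, ‖h l‖ ^ 2 := by
  set g : ℕ → ℝ := fun l => ‖v l‖ ^ 2 with hgdef
  have hone : ∀ l : ℕ, (1 : ℝ) ≤ 1 + l := fun l =>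
    le_add_of_nonneg_right (Nat.cast_nonneg l)
  have hg : Summable g := by
    refine hv.of_nonneg_of_le (fun l => sq_nonneg _) fun l => ?_
    simp only [hgdef]
    nlinarith [sq_nonneg (‖v l‖), hone l]
  have hC : 0 ≤ ∑' l, ‖h l‖ ^ 2 := tsum_nonneg fun _ => sq_nonneg _
  have hcount : ∀ l : ℕ, ∑' _ : Fin (l + 1), g l = (1 + (l : ℝ)) * ‖v l‖ ^ 2 := by
    intro l
    rw [tsum_fintype]
    simp only [Finset.sum_const, Finset.card_univ, Fintype.card_fin, nsmul_eq_mul, hgdef]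
    push_cast; ring
  have hσ : Summable fun σ : Σ l : ℕ, Fin (l + 1) => g σ.1 := by
    apply (summable_sigma_of_nonneg fun σ => sq_nonneg _).2
    exact ⟨fun l => (hasSum_fintype _).summable, hv.congr fun l => (hcount l).symm⟩
  have hF : Summable fun p : ℕ × ℕ => g (p.1 + p.2) := by
    have := (Equiv.summable_iff sigmaEquiv).2 hσ
    exact this.congr fun p => rfl
  have hFk : ∀ k : ℕ, Summable fun j => g (k + j) := fun k =>
    hg.comp_injective (add_right_injective k)
  have H : HasSum (fun k => ∑' j, g (k + j)) (∑' p : ℕ × ℕ, g (p.1 + p.2)) :=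
    hF.hasSum.prod_fiberwise fun k => (hFk k).hasSum
  have hAk : Summable fun k => ∑' j, g (k + j) := H.summable
  have hFsum : ∑' k, ∑' j, g (k + j) = ∑' k : ℕ, (1 + (k : ℝ)) * ‖v k‖ ^ 2 := by
    rw [H.tsum_eq]
    have e1 : ∑' p : ℕ × ℕ, g (p.1 + p.2) = ∑' σ : Σ l : ℕ, Fin (l + 1), g σ.1 := by
      rw [← Equiv.tsum_eq sigmaEquiv (fun σ : Σ l : ℕ, Fin (l + 1) => g σ.1)]
      exact tsum_congr fun p => rfl
    rw [e1, Summable.tsum_sigma' (fun l => (hasSum_fintype _).summable) hσ]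
    exact tsum_congr hcount
  have key : ∀ k : ℕ, ‖∑' j : ℕ, v (k + j) * starRingEnd ℂ (h j)‖ ^ 2 ≤
      (∑' j, g (k + j)) * ∑' l, ‖h l‖ ^ 2 := by
    intro k
    have hnorm : ∀ j, ‖v (k + j) * starRingEnd ℂ (h j)‖ = ‖v (k + j)‖ * ‖h j‖ := by
      intro j; rw [norm_mul, RCLike.norm_conj]
    have hsum_norm : Summable fun j => ‖v (k + j) * starRingEnd ℂ (h j)‖ := by
      refine ((hFk k).add hh).of_nonneg_of_le (fun j => norm_nonneg _) fun j => ?_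
      rw [hnorm]
      simp only [hgdef]
      nlinarith [sq_nonneg (‖v (k + j)‖ - ‖h j‖)]
    have h1 : ‖∑' j : ℕ, v (k + j) * starRingEnd ℂ (h j)‖ ≤
        ∑' j, ‖v (k + j)‖ * ‖h j‖ :=
      (norm_tsum_le_tsum_norm hsum_norm).trans_eq (tsum_congr hnorm)
    have h2 : (∑' j, ‖v (k + j)‖ * ‖h j‖) ^ 2 ≤ (∑' j, g (k + j)) * ∑' l, ‖h l‖ ^ 2 :=
      tsum_cs _ _ (fun j => norm_nonneg _) (fun j => norm_nonneg _) (hFk k) hh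
    exact (pow_le_pow_left₀ (norm_nonneg _) h1 2).trans h2
  calc ∑' k : ℕ, ‖∑' j : ℕ, v (k + j) * starRingEnd ℂ (h j)‖ ^ 2
      ≤ ∑' k, (∑' j, g (k + j)) * ∑' l, ‖h l‖ ^ 2 := by
        refine Summable.tsum_le_tsum key ?_ (hAk.mul_right _)
        exact (hAk.mul_right _).of_nonneg_of_le (fun k => sq_nonneg _) key
    _ = (∑' k, ∑' j, g (k + j)) * ∑' l, ‖h l‖ ^ 2 := by rw [tsum_mul_right]
    _ = _ := by rw [hFsum]
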